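/- Let L be any finitary first-order language. Every monadic-like L-formula φ (i.e., every atomic subformula of φ, including equality atoms, contains at most one variable) is logically equivalent (realized by the same assignments in every L-structure) to a Boolean combination of L-formulas each of which is either quantifier-free with at most one variable, or an existential formula ∃y ψ(y) in which y is the only variable and ψ is quantifier-free. -/

import Mathlib

/- STATEMENT 9: Every monadic-like formula (each atomic subformula contains at most one
variable) of a finitary first-order language is logically equivalent to a Boolean
combination of formulas each of which is either quantifier-free with at most one
variable, or an existential formula ∃y ψ(y) with y its only variable and ψ
quantifier-free. -/

open FirstOrder Language

universe u v w

namespace SatSub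

/-- The set of variables occurring in a term. -/
def termVars {L : FirstOrder.Language.{u, v}} {β : Type w} : L.Term β → Set β
  | .var x => {x}
  | .func _ ts => ⋃ i, termVars (ts i)

/-- A formula is monadic-like iff each of its atomic subformulas (including equality
atoms) contains at most one variable (free or bound). -/
def MonadicLike {L : FirstOrder.Language.{u, v}} {α : Type w} :
    ∀ {n : ℕ}, L.BoundedFormula α n → Prop
  | _, .falsum => True
  | _, .equal t₁ t₂ => (termVars t₁ ∪ termVars t₂).Subsingleton
  | _, .rel _ ts => (⋃ i, termVars (ts i)).Subsingleton
  | _, .imp f₁ f₂ => MonadicLike f₁ ∧ MonadicLike f₂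
  | _, .all f => MonadicLike f

/-- The set of free variables (from `α`) occurring in a bounded formula. -/
def freeVars {L : FirstOrder.Language.{u, v}} {α : Type w} :
    ∀ {n : ℕ}, L.BoundedFormula α n → Set α
  | _, .falsum => ∅
  | _, .equal t₁ t₂ => {a | Sum.inl a ∈ termVars t₁ ∪ termVars t₂}
  | _, .rel _ ts => {a | ∃ i, Sum.inl a ∈ termVars (ts i)}
  | _, .imp f₁ f₂ => freeVars f₁ ∪ freeVars f₂
  | _, .all f => freeVars f

/-- Boolean combinations (via negation, conjunction and disjunction) of formulas
satisfying a predicate `P`. -/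
inductive IsBoolComb {L : FirstOrder.Language.{u, v}} {α : Type w}
    (P : L.Formula α → Prop) : L.Formula α → Prop
  | base {φ} : P φ → IsBoolComb P φ
  | not {φ} : IsBoolComb P φ → IsBoolComb P (∼φ)
  | inf {φ ψ} : IsBoolComb P φ → IsBoolComb P ψ → IsBoolComb P (φ ⊓ ψ)
  | sup {φ ψ} : IsBoolComb P φ → IsBoolComb P ψ → IsBoolComb P (φ ⊔ ψ)

/-- Either a quantifier-free formula with at most one variable, or an existential
formula `∃ y, ψ y` in which the bound variable `y` is the only variable and `ψ` is
quantifier-free. -/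
def OneVarBasic {L : FirstOrder.Language.{u, v}} {α : Type w} (ρ : L.Formula α) : Prop :=
  (ρ.IsQF ∧ (freeVars ρ).Subsingleton) ∨
    ∃ ψ : L.BoundedFormula α 1, ψ.IsQF ∧ freeVars ψ = ∅ ∧ ρ = ψ.ex

variable {L : FirstOrder.Language.{u, v}} {α : Type w} {β : Type*}

theorem termVars_relabel (g : β → α) (t : L.Term β) :
    termVars (t.relabel g) = g '' termVars t := by
  induction t with
  | var x => simp [termVars, Term.relabel]
  | func f ts ih =>
      simp only [termVars, Term.relabel, Set.image_iUnion]
      exact Set.iUnion_congr ih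

theorem realize_term_congr {M : Type*} [L.Structure M] {t : L.Term β}
    {v v' : β → M} (h : ∀ x ∈ termVars t, v x = v' x) : t.realize v = t.realize v' := by
  induction t with
  | var x => exact h x (by simp [termVars])
  | func f ts ih =>
      simp only [Term.realize]
      congr 1
      funext i
      exact ih i fun x hx => h x (by simp only [termVars]; exact Set.mem_iUnion.2 ⟨i, hx⟩)

/-- The set of all variables (free or bound) occurring in a bounded formula. -/
def allVars {L : FirstOrder.Language.{u, v}} {α : Type w} :
    ∀ {n : ℕ}, L.BoundedFormula α n → Set (α ⊕ Fin n)
  | _, .falsum => ∅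
  | _, .equal t₁ t₂ => termVars t₁ ∪ termVars t₂
  | _, .rel _ ts => ⋃ i, termVars (ts i)
  | _, .imp f₁ f₂ => allVars f₁ ∪ allVars f₂
  | _, .all f => {x | Sum.map id Fin.castSucc x ∈ allVars f}

theorem allVars_falsum {n : ℕ} : allVars (.falsum : L.BoundedFormula α n) = ∅ := rfl

theorem allVars_not {n : ℕ} (φ : L.BoundedFormula α n) : allVars (∼φ) = allVars φ := by
  show allVars φ ∪ allVars .falsum = allVars φ
  simp [allVars_falsum]

theorem allVars_inf {n : ℕ} (φ ψ : L.BoundedFormula α n) :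
    allVars (φ ⊓ ψ) = allVars φ ∪ allVars ψ := by
  show (allVars φ ∪ (allVars ψ ∪ allVars .falsum) ∪ allVars .falsum) = _
  simp [allVars_falsum]


/-- Renaming of all variables; junk on quantified formulas. -/
def rename {α β : Type w} {m k : ℕ} (g : α ⊕ Fin m → β ⊕ Fin k) :
    L.BoundedFormula α m → L.BoundedFormula β k
  | .falsum => .falsum
  | .equal t₁ t₂ => .equal (t₁.relabel g) (t₂.relabel g)
  | .rel R ts => .rel R fun i => (ts i).relabel g
  | .imp f₁ f₂ => .imp (rename g f₁) (rename g f₂)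
  | .all _ => .falsum

variable {γ : Type w} {m k : ℕ}

theorem rename_isQF (g : α ⊕ Fin m → γ ⊕ Fin k) {f : L.BoundedFormula α m}
    (hf : f.IsQF) : (rename g f).IsQF := by
  induction hf with
  | falsum => exact BoundedFormula.IsQF.falsum
  | of_isAtomic h =>
      cases h with
      | equal t₁ t₂ => exact (BoundedFormula.IsAtomic.equal _ _).isQF
      | rel R ts => exact (BoundedFormula.IsAtomic.rel _ _).isQF
  | imp _ _ ih₁ ih₂ => exact ih₁.imp ih₂

theorem allVars_rename (g : α ⊕ Fin m → γ ⊕ Fin k) (f : L.BoundedFormula α m) :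
    allVars (rename g f) ⊆ g '' allVars f := by
  induction f with
  | falsum => simp [rename, allVars]
  | equal t₁ t₂ =>
      simp only [rename, allVars, termVars_relabel, Set.image_union]
      exact subset_rfl
  | rel R ts =>
      simp only [rename, allVars, termVars_relabel, Set.image_iUnion]
      exact subset_rfl
  | imp f₁ f₂ ih₁ ih₂ =>
      simp only [rename, allVars, Set.image_union]
      exact Set.union_subset_union (ih₁ g) (ih₂ g)
  | all f ih => simp [rename, allVars]

theorem realize_rename (g : α ⊕ Fin m → γ ⊕ Fin k) {f : L.BoundedFormula α m}
    (hf : f.IsQF) {M : Type*} [L.Structure M] (w : γ → M) (ys : Fin k → M) :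
    (rename g f).Realize w ys ↔
      f.Realize (fun a => Sum.elim w ys (g (Sum.inl a))) (fun i => Sum.elim w ys (g (Sum.inr i))) := by
  have key : Sum.elim (fun a => Sum.elim w ys (g (Sum.inl a))) (fun i => Sum.elim w ys (g (Sum.inr i)))
      = Sum.elim w ys ∘ g := by funext x; cases x <;> rfl
  induction hf with
  | falsum => rfl
  | of_isAtomic h =>
      cases h with
      | equal t₁ t₂ =>
          show BoundedFormula.Realize (.equal (t₁.relabel g) (t₂.relabel g)) w ys ↔ _
          simp only [BoundedFormula.Realize, BoundedFormula.realize_bdEqual, BoundedFormula.realize_rel, Term.realize_relabel, key]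
      | rel R ts =>
          show BoundedFormula.Realize (.rel R fun i => (ts i).relabel g) w ys ↔ _
          simp only [BoundedFormula.Realize, BoundedFormula.realize_bdEqual, BoundedFormula.realize_rel, Term.realize_relabel, key]
  | imp _ _ ih₁ ih₂ =>
      simp only [rename, BoundedFormula.realize_imp]
      exact imp_congr ih₁ ih₂

theorem realize_congr {n : ℕ} {f : L.BoundedFormula α n} (hf : f.IsQF)
    {M : Type*} [L.Structure M] {v v' : α → M} {xs xs' : Fin n → M}
    (h : ∀ x ∈ allVars f, Sum.elim v xs x = Sum.elim v' xs' x) :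
    f.Realize v xs ↔ f.Realize v' xs' := by
  induction hf with
  | falsum => rfl
  | of_isAtomic ha =>
      cases ha with
      | equal t₁ t₂ =>
          show BoundedFormula.Realize (.equal t₁ t₂) v xs ↔ _
          simp only [BoundedFormula.Realize, BoundedFormula.realize_bdEqual]
          rw [realize_term_congr (v' := Sum.elim v' xs') fun x hx => h x (Set.mem_union_left _ hx),
            realize_term_congr (v' := Sum.elim v' xs') fun x hx => h x (Set.mem_union_right _ hx)]
      | rel R ts =>
          show BoundedFormula.Realize (.rel R ts) v xs ↔ _
          simp only [BoundedFormula.Realize, BoundedFormula.realize_rel]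
          rw [show (fun i => Term.realize (Sum.elim v xs) (ts i))
              = fun i => Term.realize (Sum.elim v' xs') (ts i) from
            funext fun i => realize_term_congr fun x hx =>
              h x (Set.mem_iUnion.2 ⟨i, hx⟩)]
  | @imp f₁ f₂ h₁ h₂ ih₁ ih₂ =>
      have e₁ := ih₁ fun x hx => h x (Set.mem_union_left _ hx)
      have e₂ := ih₂ fun x hx => h x (Set.mem_union_right _ hx)
      simp only [BoundedFormula.realize_imp]
      exact imp_congr e₁ e₂


/-- Variable-lowering map, sending the last bound variable to `d`. -/
def lowerVar {n : ℕ} (d : α ⊕ Fin n) : α ⊕ Fin (n + 1) → α ⊕ Fin n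
  | .inl a => .inl a
  | .inr j => if h : j = Fin.last n then d else .inr (j.castPred h)

theorem elim_lowerVar {n : ℕ} {M : Type*} (d : α ⊕ Fin n) (v : α → M) (xs : Fin n → M) (y : M)
    {x : α ⊕ Fin (n + 1)} (hx : x ≠ Sum.inr (Fin.last n)) :
    Sum.elim v xs (lowerVar d x) = Sum.elim v (Fin.snoc xs y) x := by
  rcases x with a | j
  · rfl
  · have hj : j ≠ Fin.last n := fun h => hx (by rw [h])
    simp only [lowerVar, dif_neg hj, Sum.elim_inr]
    conv_rhs => rw [← Fin.castSucc_castPred j hj]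
    rw [Fin.snoc_castSucc]

/-- A basic formula: quantifier-free with at most one variable (free or bound), or an
existential of a quantifier-free formula whose only variable is the newly bound one. -/
def Basic {n : ℕ} (ρ : L.BoundedFormula α n) : Prop :=
  (ρ.IsQF ∧ (allVars ρ).Subsingleton) ∨
    ∃ ψ : L.BoundedFormula α (n + 1), ψ.IsQF ∧
      allVars ψ ⊆ {Sum.inr (Fin.last n)} ∧ ρ = ψ.ex

/-- Boolean combinations of basic bounded formulas. -/
inductive BC {n : ℕ} : L.BoundedFormula α n → Prop
  | base {φ} : Basic φ → BC φ
  | not {φ} : BC φ → BC (∼φ)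
  | inf {φ ψ} : BC φ → BC ψ → BC (φ ⊓ ψ)
  | sup {φ ψ} : BC φ → BC ψ → BC (φ ⊔ ψ)

theorem basic_lower {n : ℕ} {ρ : L.BoundedFormula α (n + 1)} (h : Basic ρ) :
    (ρ.IsQF ∧ allVars ρ ⊆ {Sum.inr (Fin.last n)}) ∨
      ∃ ρ' : L.BoundedFormula α n, Basic ρ' ∧
        ∀ (M : Type (max u v)) [L.Structure M] (v : α → M) (xs : Fin n → M) (y : M),
          ρ'.Realize v xs ↔ ρ.Realize v (Fin.snoc xs y) := by
  rcases h with ⟨hqf, hss⟩ | ⟨ψ, hqf, hsub, rfl⟩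
  · by_cases hx : allVars ρ ⊆ {Sum.inr (Fin.last n)}
    · exact Or.inl ⟨hqf, hx⟩
    · right
      obtain ⟨x₀, hx₀, hne⟩ := Set.not_subset.1 hx
      rw [Set.mem_singleton_iff] at hne
      have hsub' : ∀ x ∈ allVars ρ, x = x₀ := fun x hx' => hss hx' hx₀
      have hde : Nonempty (α ⊕ Fin n) := by
        rcases x₀ with a | j
        · exact ⟨Sum.inl a⟩
        · exact ⟨Sum.inr (j.castPred fun hj => hne (by rw [hj]))⟩
      obtain ⟨d⟩ := hde
      refine ⟨rename (lowerVar d) ρ, Or.inl ⟨rename_isQF _ hqf, ?_⟩, ?_⟩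
      · intro z hz z' hz'
        obtain ⟨x, hxm, rfl⟩ := allVars_rename _ _ hz
        obtain ⟨x', hxm', rfl⟩ := allVars_rename _ _ hz'
        rw [hsub' x hxm, hsub' x' hxm']
      · intro M _ v xs y
        rw [realize_rename (lowerVar d) hqf]
        apply realize_congr hqf
        intro x hxm
        have hx0 := hsub' x hxm
        subst hx0
        have : Sum.elim (fun a => Sum.elim v xs (lowerVar d (Sum.inl a)))
            (fun i => Sum.elim v xs (lowerVar d (Sum.inr i))) x
            = Sum.elim v xs (lowerVar d x) := by cases x <;> rfl
        rw [this]
        exact elim_lowerVar d v xs y hne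
  · right
    refine ⟨(rename (lowerVar (Sum.inr (Fin.last n))) ψ).ex,
      Or.inr ⟨_, rename_isQF _ hqf, ?_, rfl⟩, ?_⟩
    · intro z hz
      obtain ⟨x, hxm, rfl⟩ := allVars_rename _ _ hz
      have := hsub hxm
      rw [Set.mem_singleton_iff] at this
      subst this
      simp [lowerVar]
    · intro M _ v xs y
      rw [BoundedFormula.realize_ex, BoundedFormula.realize_ex]
      apply exists_congr
      intro z
      rw [realize_rename _ hqf]
      apply realize_congr hqf
      intro x hxm
      have hx0 := hsub hxm
      rw [Set.mem_singleton_iff] at hx0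
      subst hx0
      simp [lowerVar, Fin.snoc_last]


/-- Negation of a DNF (list of clauses, clauses = lists of signed literals). -/
def negDNF {n : ℕ} : List (List (Bool × L.BoundedFormula α n)) →
    List (List (Bool × L.BoundedFormula α n))
  | [] => [ ([] : List (Bool × L.BoundedFormula α n)) ]
  | C :: D => C.flatMap fun p => (negDNF D).map fun C' => (!p.1, p.2) :: C'

theorem negDNF_basic {n : ℕ} : ∀ {D : List (List (Bool × L.BoundedFormula α n))},
    (∀ C ∈ D, ∀ p ∈ C, Basic p.2) → ∀ C ∈ negDNF D, ∀ p ∈ C, Basic p.2 := by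
  intro D
  induction D with
  | nil =>
      intro _ C hC p hp
      simp only [negDNF, List.mem_singleton] at hC
      subst hC
      simp at hp
  | cons C₀ D ih =>
      intro hD C hC p hp
      simp only [negDNF, List.mem_flatMap, List.mem_map] at hC
      obtain ⟨q, hq, C', hC', rfl⟩ := hC
      rcases List.mem_cons.1 hp with rfl | hp
      · exact hD C₀ (List.mem_cons_self) q hq
      · exact ih (fun C h => hD C (List.mem_cons_of_mem _ h)) C' hC' p hp

theorem negDNF_spec {n : ℕ} (P : L.BoundedFormula α n → Prop)
    (D : List (List (Bool × L.BoundedFormula α n))) :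
    ((∃ C ∈ negDNF D, ∀ p ∈ C, (P p.2 ↔ p.1 = true)) ↔
      ¬ ∃ C ∈ D, ∀ p ∈ C, (P p.2 ↔ p.1 = true)) := by
  have hnl : ∀ (p : Bool × L.BoundedFormula α n),
      (P p.2 ↔ (!p.1) = true) ↔ ¬ (P p.2 ↔ p.1 = true) := by
    rintro ⟨b, ρ⟩
    cases b <;> simp
  induction D with
  | nil => simp [negDNF]
  | cons C D ih =>
      simp only [negDNF, List.mem_flatMap, List.mem_map]
      constructor
      · rintro ⟨C'', ⟨p, hp, C', hC', rfl⟩, hall⟩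
        have h1 : ¬ (P p.2 ↔ p.1 = true) := (hnl p).1 (hall _ (List.mem_cons_self))
        have h2 : ∃ C ∈ negDNF D, ∀ q ∈ C, (P q.2 ↔ q.1 = true) :=
          ⟨C', hC', fun q hq => hall q (List.mem_cons_of_mem _ hq)⟩
        replace h2 := ih.1 h2
        rintro ⟨C₀, hC₀, hall₀⟩
        rcases List.mem_cons.1 hC₀ with rfl | hC₀
        · exact h1 (hall₀ p hp)
        · exact h2 ⟨C₀, hC₀, hall₀⟩
      · intro hneg
        have h1 : ∃ p ∈ C, ¬ (P p.2 ↔ p.1 = true) := by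
          by_contra hcon
          push_neg at hcon
          exact hneg ⟨C, List.mem_cons_self, hcon⟩
        have h2 : ¬ ∃ C₀ ∈ D, ∀ q ∈ C₀, (P q.2 ↔ q.1 = true) := fun ⟨C₀, h, h'⟩ =>
          hneg ⟨C₀, List.mem_cons_of_mem _ h, h'⟩
        replace h2 := ih.2 h2
        obtain ⟨p, hp, hnp⟩ := h1
        obtain ⟨C', hC', hall'⟩ := h2
        refine ⟨(!p.1, p.2) :: C', ⟨p, hp, C', hC', rfl⟩, ?_⟩
        intro q hq
        rcases List.mem_cons.1 hq with rfl | hq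
        · exact (hnl p).2 hnp
        · exact hall' q hq

theorem BC.dnf {n : ℕ} {χ : L.BoundedFormula α n} (h : BC χ) :
    ∃ D : List (List (Bool × L.BoundedFormula α n)),
      (∀ C ∈ D, ∀ p ∈ C, Basic p.2) ∧
      ∀ (M : Type (max u v)) [L.Structure M] (v : α → M) (xs : Fin n → M),
        χ.Realize v xs ↔ ∃ C ∈ D, ∀ p ∈ C, (p.2.Realize v xs ↔ p.1 = true) := by
  induction h with
  | @base φ hb =>
      refine ⟨[ [(true, φ)] ], ?_, ?_⟩
      · intro C hC p hp
        simp only [List.mem_singleton] at hC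
        subst hC
        simp only [List.mem_singleton] at hp
        subst hp
        exact hb
      · intro M _ v xs
        simp
  | @not φ _ ih =>
      obtain ⟨D, hDb, hDs⟩ := ih
      refine ⟨negDNF D, negDNF_basic hDb, ?_⟩
      intro M _ v xs
      rw [BoundedFormula.realize_not, hDs M v xs, ← negDNF_spec (fun ρ => ρ.Realize v xs) D]
  | @inf φ ψ _ _ ih₁ ih₂ =>
      obtain ⟨D₁, hb₁, hs₁⟩ := ih₁
      obtain ⟨D₂, hb₂, hs₂⟩ := ih₂
      refine ⟨D₁.flatMap fun C₁ => D₂.map fun C₂ => C₁ ++ C₂, ?_, ?_⟩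
      · intro C hC p hp
        simp only [List.mem_flatMap, List.mem_map] at hC
        obtain ⟨C₁, hC₁, C₂, hC₂, rfl⟩ := hC
        rcases List.mem_append.1 hp with hp | hp
        · exact hb₁ C₁ hC₁ p hp
        · exact hb₂ C₂ hC₂ p hp
      · intro M _ v xs
        rw [BoundedFormula.realize_inf, hs₁ M v xs, hs₂ M v xs]
        constructor
        · rintro ⟨⟨C₁, hC₁, h₁⟩, ⟨C₂, hC₂, h₂⟩⟩
          refine ⟨C₁ ++ C₂, ?_, ?_⟩
          · simp only [List.mem_flatMap, List.mem_map]
            exact ⟨C₁, hC₁, C₂, hC₂, rfl⟩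
          · intro p hp
            rcases List.mem_append.1 hp with hp | hp
            · exact h₁ p hp
            · exact h₂ p hp
        · rintro ⟨C, hC, hall⟩
          simp only [List.mem_flatMap, List.mem_map] at hC
          obtain ⟨C₁, hC₁, C₂, hC₂, rfl⟩ := hC
          exact ⟨⟨C₁, hC₁, fun p hp => hall p (List.mem_append.2 (Or.inl hp))⟩,
            ⟨C₂, hC₂, fun p hp => hall p (List.mem_append.2 (Or.inr hp))⟩⟩
  | @sup φ ψ _ _ ih₁ ih₂ =>
      obtain ⟨D₁, hb₁, hs₁⟩ := ih₁
      obtain ⟨D₂, hb₂, hs₂⟩ := ih₂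
      refine ⟨D₁ ++ D₂, ?_, ?_⟩
      · intro C hC
        rcases List.mem_append.1 hC with hC | hC
        · exact hb₁ C hC
        · exact hb₂ C hC
      · intro M _ v xs
        rw [BoundedFormula.realize_sup, hs₁ M v xs, hs₂ M v xs]
        constructor
        · rintro (⟨C, hC, h⟩ | ⟨C, hC, h⟩)
          · exact ⟨C, List.mem_append.2 (Or.inl hC), h⟩
          · exact ⟨C, List.mem_append.2 (Or.inr hC), h⟩
        · rintro ⟨C, hC, h⟩
          rcases List.mem_append.1 hC with hC | hC
          · exact Or.inl ⟨C, hC, h⟩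
          · exact Or.inr ⟨C, hC, h⟩


theorem allVars_top {n : ℕ} : allVars (⊤ : L.BoundedFormula α n) = ∅ := by
  show allVars (∼(.falsum)) = ∅
  rw [allVars_not]
  rfl

theorem allVars_bot {n : ℕ} : allVars (⊥ : L.BoundedFormula α n) = ∅ := rfl

theorem clause_ex {n : ℕ} :
    ∀ C : List (Bool × L.BoundedFormula α (n + 1)), (∀ p ∈ C, Basic p.2) →
      ∀ η : L.BoundedFormula α (n + 1),
        η.IsQF → allVars η ⊆ {Sum.inr (Fin.last n)} →
      ∃ χ' : L.BoundedFormula α n, BC χ' ∧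
        ∀ (M : Type (max u v)) [L.Structure M] [Nonempty M] (v : α → M) (xs : Fin n → M),
          χ'.Realize v xs ↔ ∃ y, η.Realize v (Fin.snoc xs y) ∧
            ∀ p ∈ C, (p.2.Realize v (Fin.snoc xs y) ↔ p.1 = true) := by
  intro C
  induction C with
  | nil =>
      intro _ η hqf hsub
      refine ⟨η.ex, BC.base (Or.inr ⟨η, hqf, hsub, rfl⟩), ?_⟩
      intro M _ _ v xs
      rw [BoundedFormula.realize_ex]
      simp
  | cons p C ih =>
      intro hbasic η hqf hsub
      have hb : Basic p.2 := hbasic p (List.mem_cons_self)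
      have hbC : ∀ q ∈ C, Basic q.2 := fun q hq => hbasic q (List.mem_cons_of_mem _ hq)
      rcases basic_lower hb with ⟨hρqf, hρsub⟩ | ⟨ρ', hρ', hρeq⟩
      · -- p.2 mentions only the last variable: absorb into η
        have hρbqf : (cond p.1 p.2 (∼p.2)).IsQF := by
          cases p.1
          · exact hρqf.not
          · exact hρqf
        have hρbsub : allVars (cond p.1 p.2 (∼p.2)) ⊆ {Sum.inr (Fin.last n)} := by
          cases p.1
          · rw [Bool.cond_false, allVars_not]; exact hρsub
          · exact hρsub
        obtain ⟨χ', hχ', hs⟩ := ih hbC (η ⊓ cond p.1 p.2 (∼p.2)) (hqf.inf hρbqf)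
          (by rw [allVars_inf]; exact Set.union_subset hsub hρbsub)
        refine ⟨χ', hχ', ?_⟩
        intro M _ _ v xs
        rw [hs M v xs]
        apply exists_congr
        intro y
        have hlit : (cond p.1 p.2 (∼p.2)).Realize v (Fin.snoc xs y) ↔
            (p.2.Realize v (Fin.snoc xs y) ↔ p.1 = true) := by
          cases hp : p.1 <;> simp [BoundedFormula.realize_not]
        rw [BoundedFormula.realize_inf, List.forall_mem_cons, hlit]
        tauto
      · -- p.2 does not mention the last variable: pull it out
        obtain ⟨χ'', hχ'', hs⟩ := ih hbC η hqf hsub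
        have hlitBC : BC (cond p.1 ρ' (∼ρ')) := by
          cases p.1
          · exact BC.not (BC.base hρ')
          · exact BC.base hρ'
        refine ⟨χ'' ⊓ cond p.1 ρ' (∼ρ'), BC.inf hχ'' hlitBC, ?_⟩
        intro M _ _ v xs
        have hlit' : (cond p.1 ρ' (∼ρ')).Realize v xs ↔ (ρ'.Realize v xs ↔ p.1 = true) := by
          cases hp : p.1 <;> simp [BoundedFormula.realize_not]
        rw [BoundedFormula.realize_inf, hs M v xs, hlit']
        constructor
        · rintro ⟨⟨y, hy1, hy2⟩, hl⟩
          refine ⟨y, hy1, List.forall_mem_cons.2 ⟨?_, hy2⟩⟩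
          rw [← hρeq M v xs y]
          exact hl
        · rintro ⟨y, hy1, hy2⟩
          rw [List.forall_mem_cons] at hy2
          refine ⟨⟨y, hy1, hy2.2⟩, ?_⟩
          rw [hρeq M v xs y]
          exact hy2.1

theorem ex_of_BC {n : ℕ} {χ : L.BoundedFormula α (n + 1)} (h : BC χ) :
    ∃ χ' : L.BoundedFormula α n, BC χ' ∧
      ∀ (M : Type (max u v)) [L.Structure M] [Nonempty M] (v : α → M) (xs : Fin n → M),
        χ'.Realize v xs ↔ ∃ y, χ.Realize v (Fin.snoc xs y) := by
  obtain ⟨D, hDb, hDs⟩ := h.dnf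
  suffices h' : ∃ χ' : L.BoundedFormula α n, BC χ' ∧
      ∀ (M : Type (max u v)) [L.Structure M] [Nonempty M] (v : α → M) (xs : Fin n → M),
        χ'.Realize v xs ↔ ∃ C ∈ D, ∃ y, ∀ p ∈ C,
          (p.2.Realize v (Fin.snoc xs y) ↔ p.1 = true) by
    obtain ⟨χ', h1, h2⟩ := h'
    refine ⟨χ', h1, ?_⟩
    intro M _ _ v xs
    rw [h2 M v xs]
    constructor
    · rintro ⟨C, hC, y, hy⟩
      exact ⟨y, (hDs M v _).2 ⟨C, hC, hy⟩⟩
    · rintro ⟨y, hy⟩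
      obtain ⟨C, hC, hall⟩ := (hDs M v _).1 hy
      exact ⟨C, hC, y, hall⟩
  clear hDs
  induction D with
  | nil =>
      refine ⟨⊥, BC.base (Or.inl ⟨BoundedFormula.isQF_bot, by rw [allVars_bot]; exact
        Set.subsingleton_empty⟩), ?_⟩
      intro M _ _ v xs
      simp
  | cons C D ih =>
      obtain ⟨χC, hχC, hsC⟩ := clause_ex C (hDb C (List.mem_cons_self)) ⊤
        BoundedFormula.isQF_bot.not (by rw [allVars_top]; exact Set.empty_subset _)
      obtain ⟨χD, hχD, hsD⟩ := ih fun C' hC' => hDb C' (List.mem_cons_of_mem _ hC')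
      refine ⟨χC ⊔ χD, BC.sup hχC hχD, ?_⟩
      intro M _ _ v xs
      rw [BoundedFormula.realize_sup, hsC M v xs, hsD M v xs]
      constructor
      · rintro (⟨y, _, hy⟩ | ⟨C', hC', hy⟩)
        · exact ⟨C, List.mem_cons_self, y, hy⟩
        · exact ⟨C', List.mem_cons_of_mem _ hC', hy⟩
      · rintro ⟨C', hC', y, hy⟩
        rcases List.mem_cons.1 hC' with rfl | hC'
        · exact Or.inl ⟨y, by simp, hy⟩
        · exact Or.inr ⟨C', hC', y, hy⟩


theorem mem_freeVars_iff {n : ℕ} (f : L.BoundedFormula α n) (a : α) :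
    a ∈ freeVars f ↔ Sum.inl a ∈ allVars f := by
  induction f with
  | falsum => simp [freeVars, allVars]
  | equal t₁ t₂ => exact Iff.rfl
  | rel R ts =>
      simp only [freeVars, allVars, Set.mem_setOf_eq, Set.mem_iUnion]
  | imp f₁ f₂ ih₁ ih₂ =>
      simp only [freeVars, allVars, Set.mem_union, ih₁, ih₂]
  | all f ih => simpa [allVars, freeVars] using ih

theorem basic_oneVarBasic {ρ : L.Formula α} (h : Basic ρ) : OneVarBasic ρ := by
  rcases h with ⟨hqf, hss⟩ | ⟨ψ, hqf, hsub, rfl⟩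
  · refine Or.inl ⟨hqf, ?_⟩
    intro a ha b hb
    exact Sum.inl.inj (hss ((mem_freeVars_iff ρ a).1 ha) ((mem_freeVars_iff ρ b).1 hb))
  · refine Or.inr ⟨ψ, hqf, ?_, rfl⟩
    rw [Set.eq_empty_iff_forall_notMem]
    intro a ha
    have h2 := hsub ((mem_freeVars_iff ψ a).1 ha)
    rw [Set.mem_singleton_iff] at h2
    exact Sum.inl_ne_inr h2

theorem BC.isBoolComb {χ : L.Formula α} (h : BC χ) : IsBoolComb OneVarBasic χ := by
  induction h with
  | base hb => exact IsBoolComb.base (basic_oneVarBasic hb)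
  | not _ ih => exact IsBoolComb.not ih
  | inf _ _ ih₁ ih₂ => exact IsBoolComb.inf ih₁ ih₂
  | sup _ _ ih₁ ih₂ => exact IsBoolComb.sup ih₁ ih₂

theorem main_boundedFormula : ∀ {n : ℕ} (f : L.BoundedFormula α n), MonadicLike f →
    ∃ χ : L.BoundedFormula α n, BC χ ∧
      ∀ (M : Type (max u v)) [L.Structure M] [Nonempty M] (v : α → M) (xs : Fin n → M),
        f.Realize v xs ↔ χ.Realize v xs := by
  intro n f
  induction f with
  | falsum =>
      intro _
      exact ⟨⊥, BC.base (Or.inl ⟨BoundedFormula.isQF_bot,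
        by rw [allVars_bot]; exact Set.subsingleton_empty⟩), fun M _ _ v xs => Iff.rfl⟩
  | equal t₁ t₂ =>
      intro hml
      exact ⟨.equal t₁ t₂, BC.base (Or.inl ⟨(BoundedFormula.IsAtomic.equal t₁ t₂).isQF, hml⟩),
        fun M _ _ v xs => Iff.rfl⟩
  | rel R ts =>
      intro hml
      exact ⟨.rel R ts, BC.base (Or.inl ⟨(BoundedFormula.IsAtomic.rel R ts).isQF, hml⟩),
        fun M _ _ v xs => Iff.rfl⟩
  | imp f₁ f₂ ih₁ ih₂ =>
      intro hml
      obtain ⟨χ₁, h₁, s₁⟩ := ih₁ hml.1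
      obtain ⟨χ₂, h₂, s₂⟩ := ih₂ hml.2
      refine ⟨∼χ₁ ⊔ χ₂, BC.sup (BC.not h₁) h₂, ?_⟩
      intro M _ _ v xs
      rw [BoundedFormula.realize_imp, BoundedFormula.realize_sup, BoundedFormula.realize_not,
        s₁ M v xs, s₂ M v xs]
      tauto
  | all f ih =>
      intro hml
      obtain ⟨χ₁, h₁, s₁⟩ := ih hml
      obtain ⟨χ₂, h₂, s₂⟩ := ex_of_BC (BC.not h₁)
      refine ⟨∼χ₂, BC.not h₂, ?_⟩
      intro M _ _ v xs
      rw [BoundedFormula.realize_all, BoundedFormula.realize_not, s₂ M v xs]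
      push_neg
      apply forall_congr'
      intro y
      rw [s₁ M v _, BoundedFormula.realize_not, not_not]

theorem monadicLike_equiv_boolComb
    {L : FirstOrder.Language.{u, v}} {α : Type w} (φ : L.Formula α)
    (hφ : MonadicLike φ) :
    ∃ χ : L.Formula α, IsBoolComb OneVarBasic χ ∧
      ∀ (M : Type (max u v)) [L.Structure M] [Nonempty M] (va : α → M),
        φ.Realize va ↔ χ.Realize va := by
  obtain ⟨χ, h1, h2⟩ := main_boundedFormula φ hφ
  refine ⟨χ, h1.isBoolComb, ?_⟩
  intro M _ _ va
  exact h2 M va default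

end SatSub
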